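/- Let T be a tree on n = 2m vertices whose vertices are ordered so that its adjacency matrix has the block form A = [[0, M],[Mᵀ, 0]] with M an m×m 0-1 matrix, and suppose the characteristic polynomial of A is irreducible over ℚ. Then Δ(T) = 2^n · Δ(MᵀM)². -/

import Mathlib

open Matrix Polynomial
open scoped Classical

/-- An enumeration of the complex roots (with multiplicity) of a polynomial that has
exactly `n` roots, obtained by choice (and junk otherwise). -/
noncomputable def rootsEnum (n : ℕ) (f : Polynomial ℂ) : Fin n → ℂ :=
  if h : ∃ α : Fin n → ℂ, f.roots = Multiset.map α Finset.univ.val then h.choose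
  else fun _ => 0

/-- The discriminant `∏_{i<j} (αᵢ - αⱼ)²` of a polynomial with `n` complex roots
`α₁, …, αₙ` listed with multiplicity. -/
noncomputable def polyDisc (n : ℕ) (f : Polynomial ℂ) : ℂ :=
  ∏ i : Fin n, ∏ j ∈ Finset.univ.filter (fun j => i < j),
    (rootsEnum n f i - rootsEnum n f j) ^ 2

lemma pair_count (n : ℕ) : ∑ i : Fin n, (Finset.univ.filter (fun j => i < j)).card = n.choose 2 := by
  have key : ∀ i : Fin n, (Finset.univ.filter (fun j => i < j)).card
      + (Finset.univ.filter (fun j : Fin n => j < i)).card + 1 = n := by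
    intro i
    have h1 : (Finset.univ.filter (fun j => i < j)) ∪ (Finset.univ.filter (fun j : Fin n => j < i)) ∪ {i} = Finset.univ := by
      ext j
      simp only [Finset.mem_union, Finset.mem_filter, Finset.mem_univ, true_and,
        Finset.mem_singleton]
      rcases lt_trichotomy i j with h | h | h
      · simp [h]
      · simp [h]
      · simp [h]
    have hd1 : Disjoint (Finset.univ.filter (fun j => i < j)) (Finset.univ.filter (fun j : Fin n => j < i)) := by
      rw [Finset.disjoint_filter]
      intro x _ h1 h2
      exact absurd (h1.trans h2) (lt_irrefl i)
    have hd2 : Disjoint ((Finset.univ.filter (fun j => i < j)) ∪ (Finset.univ.filter (fun j : Fin n => j < i))) ({i} : Finset (Fin n)) := by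
      simp only [Finset.disjoint_singleton_right, Finset.mem_union, Finset.mem_filter]
      rintro (⟨-, h⟩ | ⟨-, h⟩) <;> exact absurd h (lt_irrefl i)
    have := congrArg Finset.card h1
    rw [Finset.card_union_of_disjoint hd2, Finset.card_union_of_disjoint hd1] at this
    simpa using this
  have hswap : ∑ i : Fin n, (Finset.univ.filter (fun j : Fin n => j < i)).card
      = ∑ i : Fin n, (Finset.univ.filter (fun j => i < j)).card := by
    simp only [Finset.card_eq_sum_ones]
    exact Finset.sum_comm' (fun x y => by simp)
  have hsum : (∑ i : Fin n, (Finset.univ.filter (fun j => i < j)).card)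
      + (∑ i : Fin n, (Finset.univ.filter (fun j : Fin n => j < i)).card) + n = n * n := by
    have hs := Finset.sum_congr rfl (fun i (_ : i ∈ (Finset.univ : Finset (Fin n))) => key i)
    rw [Finset.sum_add_distrib, Finset.sum_add_distrib] at hs
    simpa [Finset.card_univ, mul_comm] using hs
  rw [Nat.choose_two_right]
  rw [hswap] at hsum
  have hn : n * (n-1) = n * n - n := by cases n <;> simp [Nat.mul_sub, Nat.succ_sub_one, Nat.mul_succ]
  omega

lemma prodD_eq {n : ℕ} (f : Polynomial ℂ) (β : Fin n → ℂ) (hmonic : f.Monic)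
    (hβ : f.roots = Multiset.map β Finset.univ.val) :
    (∏ i : Fin n, ∏ j ∈ Finset.univ.filter (fun j => i < j), (β i - β j) ^ 2)
      = (-1) ^ (n.choose 2) * (f.roots.map (fun r => f.derivative.eval r)).prod := by
  have hf : f = ∏ i : Fin n, (X - C (β i)) := by
    conv_lhs => rw [(IsAlgClosed.splits f).eq_prod_roots_of_monic hmonic]
    rw [hβ, Multiset.map_map]
    rfl
  have heval : ∀ i : Fin n, f.derivative.eval (β i) = ∏ j ∈ Finset.univ.erase i, (β i - β j) := by
    intro i
    have hsplit : f = (X - C (β i)) * ∏ j ∈ Finset.univ.erase i, (X - C (β j)) := by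
      rw [hf]
      exact (Finset.mul_prod_erase _ _ (Finset.mem_univ i)).symm
    rw [hsplit, derivative_mul]
    simp [eval_prod]
  have hms : (f.roots.map (fun r => f.derivative.eval r)).prod
      = ∏ i : Fin n, ∏ j ∈ Finset.univ.erase i, (β i - β j) := by
    rw [hβ, Multiset.map_map]
    rw [show ∏ i : Fin n, ∏ j ∈ Finset.univ.erase i, (β i - β j)
      = ∏ i : Fin n, f.derivative.eval (β i) from Finset.prod_congr rfl (fun i _ => (heval i).symm)]
    rfl
  have hdisj : ∀ i : Fin n, Disjoint (Finset.univ.filter (fun j => i < j)) (Finset.univ.filter (fun j : Fin n => j < i)) := by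
    intro i
    rw [Finset.disjoint_filter]
    intro x _ h1 h2
    exact absurd (h1.trans h2) (lt_irrefl i)
  have hsplit2 : ∀ i : Fin n, ∏ j ∈ Finset.univ.erase i, (β i - β j)
      = (∏ j ∈ Finset.univ.filter (fun j => i < j), (β i - β j))
        * ∏ j ∈ Finset.univ.filter (fun j : Fin n => j < i), (β i - β j) := by
    intro i
    rw [← Finset.prod_union (hdisj i)]
    apply Finset.prod_congr _ (fun _ _ => rfl)
    ext j
    simp only [Finset.mem_erase, Finset.mem_univ, and_true, Finset.mem_union, Finset.mem_filter,
      true_and]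
    constructor
    · intro h
      rcases lt_or_gt_of_ne h with h' | h'
      · right; exact h'
      · left; exact h'
    · rintro (h | h)
      · exact h.ne'
      · exact h.ne
  have hswap2 : ∏ i : Fin n, ∏ j ∈ Finset.univ.filter (fun j : Fin n => j < i), (β i - β j)
      = ∏ i : Fin n, ∏ j ∈ Finset.univ.filter (fun j => i < j), (β j - β i) := by
    exact Finset.prod_comm' (fun x y => by simp)
  have hE : (∏ i : Fin n, ∏ j ∈ Finset.univ.erase i, (β i - β j))
      = ∏ i : Fin n, ∏ j ∈ Finset.univ.filter (fun j => i < j), ((β i - β j) * (β j - β i)) := by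
    rw [Finset.prod_congr rfl (fun i _ => hsplit2 i), Finset.prod_mul_distrib, hswap2,
      ← Finset.prod_mul_distrib]
    simp only [Finset.prod_mul_distrib]
  rw [hms, hE]
  have hfac : ∀ i j : Fin n, (β i - β j) ^ 2 = (-1) * ((β i - β j) * (β j - β i)) := by
    intro i j; ring
  calc ∏ i : Fin n, ∏ j ∈ Finset.univ.filter (fun j => i < j), (β i - β j) ^ 2
      = ∏ i : Fin n, ∏ j ∈ Finset.univ.filter (fun j => i < j),
          ((-1) * ((β i - β j) * (β j - β i))) := by
        exact Finset.prod_congr rfl fun i _ => Finset.prod_congr rfl fun j _ => hfac i j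
    _ = (∏ i : Fin n, ∏ _j ∈ Finset.univ.filter (fun j => i < j), (-1 : ℂ))
        * ∏ i : Fin n, ∏ j ∈ Finset.univ.filter (fun j => i < j), ((β i - β j) * (β j - β i)) := by
        simp only [Finset.prod_mul_distrib]
    _ = (-1) ^ (n.choose 2)
        * ∏ i : Fin n, ∏ j ∈ Finset.univ.filter (fun j => i < j), ((β i - β j) * (β j - β i)) := by
        congr 1
        simp only [Finset.prod_const]
        rw [Finset.prod_pow_eq_pow_sum, pair_count]

lemma polyDisc_eq {n : ℕ} (f : Polynomial ℂ) (hmonic : f.Monic)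
    (hcard : Multiset.card f.roots = n) :
    polyDisc n f = (-1) ^ (n.choose 2) * (f.roots.map (fun r => f.derivative.eval r)).prod := by
  have hex : ∃ α : Fin n → ℂ, f.roots = Multiset.map α Finset.univ.val := by
    obtain ⟨l, hl⟩ : ∃ l : List ℂ, f.roots = ↑l := ⟨f.roots.toList, (Multiset.coe_toList _).symm⟩
    have hlen : l.length = n := by
      have := hcard
      rw [hl] at this
      simpa using this
    subst hlen
    refine ⟨l.get, ?_⟩
    rw [hl]
    have h2 : (Finset.univ.val : Multiset (Fin l.length)) = ↑(List.finRange l.length) := rfl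
    rw [h2, Multiset.map_coe, List.map_get_finRange]
  rw [polyDisc, rootsEnum, dif_pos hex]
  exact prodD_eq f hex.choose hmonic hex.choose_spec

lemma eval_charpoly {K : Type*} [Field K] {ι : Type*} [Fintype ι] [DecidableEq ι]
    (B : Matrix ι ι K) (x : K) :
    B.charpoly.eval x = (Matrix.diagonal (fun _ => x) - B).det := by
  rw [Matrix.charpoly]
  have h := RingHom.map_det (evalRingHom x) (Matrix.charmatrix B)
  simp only [coe_evalRingHom] at h
  rw [h]
  congr 1
  ext i j
  simp only [RingHom.mapMatrix_apply, Matrix.map_apply, Matrix.charmatrix_apply,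
    Matrix.diagonal_apply, Matrix.sub_apply, coe_evalRingHom, eval_sub, eval_C]
  split_ifs <;> simp

lemma charpoly_block {K : Type*} [Field K] [Infinite K] {m : ℕ} (N : Matrix (Fin m) (Fin m) K) :
    (Matrix.fromBlocks 0 N Nᵀ 0).charpoly = ((Nᵀ * N).charpoly).comp (X ^ 2) := by
  apply Polynomial.eq_of_infinite_eval_eq
  apply Set.Infinite.mono (s := ({(0 : K)}ᶜ : Set K))
  · intro x hx
    have hx0 : x ≠ 0 := hx
    show eval x (Matrix.fromBlocks 0 N Nᵀ 0).charpoly = eval x (((Nᵀ * N).charpoly).comp (X ^ 2))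
    rw [eval_comp, eval_pow, eval_X, _root_.eval_charpoly, _root_.eval_charpoly]
    have hsub : (Matrix.diagonal (fun _ => x) : Matrix (Fin m ⊕ Fin m) (Fin m ⊕ Fin m) K)
        - Matrix.fromBlocks 0 N Nᵀ 0
        = Matrix.fromBlocks (Matrix.diagonal fun _ : Fin m => x) (-N) (-Nᵀ) (Matrix.diagonal fun _ : Fin m => x) := by
      ext i j
      rcases i with i | i <;> rcases j with j | j <;>
        simp [Matrix.diagonal_apply, Matrix.fromBlocks, Matrix.sub_apply]
    rw [hsub]
    haveI : Invertible (Matrix.diagonal fun _ : Fin m => x) :=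
      Matrix.invertibleOfIsUnitDet _ (by
        rw [Matrix.det_diagonal, Finset.prod_const]
        exact (isUnit_iff_ne_zero.mpr hx0).pow _)
    have hinv : ⅟(Matrix.diagonal fun _ : Fin m => x) = Matrix.diagonal fun _ : Fin m => x⁻¹ := by
      apply invOf_eq_right_inv
      rw [Matrix.diagonal_mul_diagonal]
      simp [mul_inv_cancel₀ hx0]
    rw [Matrix.det_fromBlocks₁₁, hinv]
    have hC : (-Nᵀ) * (Matrix.diagonal fun _ : Fin m => x⁻¹) * (-N) = x⁻¹ • (Nᵀ * N) := by
      rw [← Matrix.smul_one_eq_diagonal, Matrix.mul_smul, Matrix.mul_one, Matrix.smul_mul,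
        neg_mul_neg]
    rw [hC, Matrix.det_diagonal, Finset.prod_const, Finset.card_univ, Fintype.card_fin]
    have hdet : x ^ m * ((Matrix.diagonal fun _ : Fin m => x) - x⁻¹ • (Nᵀ * N)).det
        = (x • ((Matrix.diagonal fun _ : Fin m => x) - x⁻¹ • (Nᵀ * N))).det := by
      rw [Matrix.det_smul, Fintype.card_fin]
    rw [hdet]
    congr 1
    rw [smul_sub, smul_smul, mul_inv_cancel₀ hx0, one_smul]
    congr 1
    ext i j
    by_cases h : i = j <;> simp [Matrix.smul_apply, Matrix.diagonal_apply, h, sq]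
  · exact Set.Finite.infinite_compl (Set.finite_singleton 0)

lemma tree_bound {m : ℕ} (M : Matrix (Fin m) (Fin m) ℤ)
    (hM : ∀ i j, M i j = 0 ∨ M i j = 1)
    (htree : (SimpleGraph.fromRel
      (fun i j : Fin m ⊕ Fin m => Matrix.fromBlocks 0 M Mᵀ 0 i j ≠ 0)).IsTree) :
    ∀ S T : Finset (Fin m), S.Nonempty → T.Nonempty →
      (∑ i ∈ S, ∑ j ∈ T, M i j) + 1 ≤ (S.card : ℤ) + T.card := by
  set G := SimpleGraph.fromRel
      (fun i j : Fin m ⊕ Fin m => Matrix.fromBlocks 0 M Mᵀ 0 i j ≠ 0) with hG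
  have hedge : ∀ i j, M i j = 1 → G.Adj (Sum.inl i) (Sum.inr j) := by
    intro i j h
    rw [hG, SimpleGraph.fromRel_adj]
    refine ⟨by simp, Or.inl ?_⟩
    simp [Matrix.fromBlocks, h]
  intro S T hS hT
  -- the root
  obtain ⟨i₀, hi₀⟩ := hS
  set r : Fin m ⊕ Fin m := Sum.inl i₀ with hr
  choose f hf hf' using fun v => htree.existsUnique_path v r
  set len : Fin m ⊕ Fin m → ℕ := fun v => (f v).length with hlen
  have hkey : ∀ (u v : Fin m ⊕ Fin m) (h : G.Adj u v),
      (len u = len v + 1 ∧ f u = SimpleGraph.Walk.cons h (f v)) ∨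
      (len v = len u + 1 ∧ f v = SimpleGraph.Walk.cons h.symm (f u)) := by
    intro u v h
    rcases Classical.em (v ∈ (f u).support) with hv | hv
    · left
      have htp : ((f u).takeUntil v hv).IsPath := (hf u).takeUntil hv
      have hdp : ((f u).dropUntil v hv).IsPath := (hf u).dropUntil hv
      have h2 : (SimpleGraph.Walk.cons h (SimpleGraph.Walk.nil : G.Walk v v)).IsPath := by
        rw [SimpleGraph.Walk.cons_isPath_iff]
        simp [h.ne]
      have h1 : (f u).takeUntil v hv = SimpleGraph.Walk.cons h SimpleGraph.Walk.nil :=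
        (htree.existsUnique_path u v).unique htp h2
      have ht := SimpleGraph.Walk.take_spec (f u) hv
      rw [h1] at ht
      have hdrop_eq : (f u).dropUntil v hv = f v := hf' v _ hdp
      rw [hdrop_eq] at ht
      rw [SimpleGraph.Walk.cons_append, SimpleGraph.Walk.nil_append] at ht
      refine ⟨?_, ht.symm⟩
      rw [hlen]
      simp only [← ht, SimpleGraph.Walk.length_cons]
    · right
      have hcons : (SimpleGraph.Walk.cons h.symm (f u)).IsPath := by
        rw [SimpleGraph.Walk.cons_isPath_iff]
        exact ⟨hf u, hv⟩
      have := (hf' v _ hcons).symm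
      refine ⟨?_, this⟩
      rw [hlen]
      simp only [this, SimpleGraph.Walk.length_cons]
  -- the finsets
  set Eset : Finset (Fin m × Fin m) := (S ×ˢ T).filter (fun p => M p.1 p.2 = 1) with hEset
  set W : Finset (Fin m ⊕ Fin m) := S.image Sum.inl ∪ T.image Sum.inr with hW
  have hWne : W.Nonempty := ⟨Sum.inl i₀, by rw [hW]; exact Finset.mem_union_left _ (Finset.mem_image_of_mem _ hi₀)⟩
  obtain ⟨w₀, hw₀W, hw₀min⟩ := Finset.exists_min_image W len hWne
  set Φ : Fin m × Fin m → Fin m ⊕ Fin m :=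
    fun p => if len (Sum.inr p.2) < len (Sum.inl p.1) then Sum.inl p.1 else Sum.inr p.2 with hΦ
  have hmaps : ∀ p ∈ Eset, Φ p ∈ W.erase w₀ := by
    intro p hp
    rw [hEset, Finset.mem_filter, Finset.mem_product] at hp
    obtain ⟨⟨hpS, hpT⟩, hp1⟩ := hp
    have ha := hedge p.1 p.2 hp1
    have hinlW : Sum.inl p.1 ∈ W := by rw [hW]; exact Finset.mem_union_left _ (Finset.mem_image_of_mem _ hpS)
    have hinrW : Sum.inr p.2 ∈ W := by rw [hW]; exact Finset.mem_union_right _ (Finset.mem_image_of_mem _ hpT)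
    rcases hkey _ _ ha with ⟨hl, _⟩ | ⟨hl, _⟩
    · have hcond : len (Sum.inr p.2) < len (Sum.inl p.1) := by omega
      simp only [hΦ]
      rw [if_pos hcond]
      rw [Finset.mem_erase]
      refine ⟨?_, hinlW⟩
      intro hcontr
      have := hw₀min (Sum.inr p.2) hinrW
      rw [← hcontr] at this
      omega
    · have hcond : ¬ (len (Sum.inr p.2) < len (Sum.inl p.1)) := by omega
      simp only [hΦ]
      rw [if_neg hcond]
      rw [Finset.mem_erase]
      refine ⟨?_, hinrW⟩
      intro hcontr
      have := hw₀min (Sum.inl p.1) hinlW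
      rw [← hcontr] at this
      omega
  have hinj : Set.InjOn Φ Eset := by
    intro p hp q hq hpq
    obtain ⟨p1, p2⟩ := p
    obtain ⟨q1, q2⟩ := q
    rw [Finset.coe_filter] at hp hq
    simp only [Set.mem_setOf_eq, Finset.mem_product] at hp hq
    obtain ⟨-, hp1⟩ := hp
    obtain ⟨-, hq1⟩ := hq
    have hap := hedge p1 p2 hp1
    have haq := hedge q1 q2 hq1
    have key : ∀ (u v₁ v₂ : Fin m ⊕ Fin m) (h₁ : G.Adj u v₁) (h₂ : G.Adj u v₂),
        f u = SimpleGraph.Walk.cons h₁ (f v₁) → f u = SimpleGraph.Walk.cons h₂ (f v₂) →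
        v₁ = v₂ := by
      intro u v₁ v₂ h₁ h₂ e₁ e₂
      have hsup := congrArg SimpleGraph.Walk.support (e₁.symm.trans e₂)
      rw [SimpleGraph.Walk.support_cons, SimpleGraph.Walk.support_cons] at hsup
      have htails : (f v₁).support = (f v₂).support := by
        injection hsup
      rw [SimpleGraph.Walk.support_eq_cons (f v₁), SimpleGraph.Walk.support_eq_cons (f v₂)]
        at htails
      injection htails
    rcases hkey _ _ hap with ⟨hlp, hep⟩ | ⟨hlp, hep⟩ <;>
      rcases hkey _ _ haq with ⟨hlq, heq⟩ | ⟨hlq, heq⟩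
    · -- both left: Φ p = inl p1, Φ q = inl q1
      have hcp : len (Sum.inr p2) < len (Sum.inl p1) := by omega
      have hcq : len (Sum.inr q2) < len (Sum.inl q1) := by omega
      simp only [hΦ] at hpq
      rw [if_pos hcp, if_pos hcq] at hpq
      have h1 : p1 = q1 := by injection hpq
      subst h1
      have h2 := key _ _ _ hap haq hep heq
      have h3 : p2 = q2 := by injection h2
      rw [h3]
    · -- p left, q right : Φ p = inl, Φ q = inr: contradiction
      have hcp : len (Sum.inr p2) < len (Sum.inl p1) := by omega
      have hcq : ¬ (len (Sum.inr q2) < len (Sum.inl q1)) := by omega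
      simp only [hΦ] at hpq
      rw [if_pos hcp, if_neg hcq] at hpq
      exact absurd hpq (by simp)
    · have hcp : ¬ (len (Sum.inr p2) < len (Sum.inl p1)) := by omega
      have hcq : len (Sum.inr q2) < len (Sum.inl q1) := by omega
      simp only [hΦ] at hpq
      rw [if_neg hcp, if_pos hcq] at hpq
      exact absurd hpq (by simp)
    · have hcp : ¬ (len (Sum.inr p2) < len (Sum.inl p1)) := by omega
      have hcq : ¬ (len (Sum.inr q2) < len (Sum.inl q1)) := by omega
      simp only [hΦ] at hpq
      rw [if_neg hcp, if_neg hcq] at hpq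
      have h2 : p2 = q2 := by injection hpq
      subst h2
      have h1 := key _ _ _ hap.symm haq.symm hep heq
      have h3 : p1 = q1 := by injection h1
      rw [h3]
  -- cardinality chain
  have hcard : Eset.card ≤ S.card + T.card - 1 := by
    have h1 := Finset.card_le_card_of_injOn Φ hmaps hinj
    have h2 : (W.erase w₀).card = W.card - 1 := Finset.card_erase_of_mem hw₀W
    have h3 : W.card = S.card + T.card := by
      rw [hW, Finset.card_union_of_disjoint, Finset.card_image_of_injective _ Sum.inl_injective,
        Finset.card_image_of_injective _ Sum.inr_injective]
      rw [Finset.disjoint_left]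
      rintro a ha hb
      simp only [Finset.mem_image] at ha hb
      obtain ⟨x, -, rfl⟩ := ha
      obtain ⟨y, -, h⟩ := hb
      exact absurd h (by simp)
    omega
  -- sum equals card
  have hsum : (∑ i ∈ S, ∑ j ∈ T, M i j) = (Eset.card : ℤ) := by
    rw [← Finset.sum_product' S T (fun i j => M i j)]
    have hfil : ∀ x ∈ S ×ˢ T, M x.1 x.2 ≠ 0 → M x.1 x.2 = 1 :=
      fun x _ hne => (hM x.1 x.2).resolve_left hne
    rw [← Finset.sum_filter_of_ne hfil]
    rw [← hEset]
    rw [Finset.sum_congr rfl (fun x hx => (Finset.mem_filter.mp hx).2)]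
    simp [mul_comm]
    rfl
  rw [hsum]
  have hW1 : 1 ≤ S.card + T.card := by
    have := Finset.card_pos.mpr ⟨i₀, hi₀⟩
    omega
  push_cast
  omega

lemma det_pm : ∀ (k : ℕ) (A : Matrix (Fin k) (Fin k) ℤ), (∀ i j, A i j = 0 ∨ A i j = 1) →
    (∀ S T : Finset (Fin k), S.Nonempty → T.Nonempty →
      (∑ i ∈ S, ∑ j ∈ T, A i j) + 1 ≤ (S.card : ℤ) + T.card) →
    A.det = 0 ∨ A.det = 1 ∨ A.det = -1 := by
  intro k
  induction k with
  | zero => intro A _ _; right; left; exact Matrix.det_fin_zero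
  | succ n ih =>
    intro A hA hP
    have hA0 : ∀ i j, 0 ≤ A i j := by
      intro i j; rcases hA i j with h | h <;> omega
    -- some row has sum ≤ 1
    have hrow : ∃ i, (∑ j, A i j) ≤ 1 := by
      by_contra hcon
      push_neg at hcon
      have h2 : ∀ i : Fin (n+1), 2 ≤ ∑ j, A i j := fun i => hcon i
      have htot := hP Finset.univ Finset.univ Finset.univ_nonempty Finset.univ_nonempty
      have hge : (2 * (n+1) : ℤ) ≤ ∑ i, ∑ j, A i j := by
        calc (2 * (n+1) : ℤ) = ∑ _i : Fin (n+1), (2 : ℤ) := by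
              simp [Finset.sum_const, Finset.card_univ, mul_comm]
          _ ≤ ∑ i, ∑ j, A i j := Finset.sum_le_sum (fun i _ => h2 i)
      simp only [Finset.card_univ, Fintype.card_fin] at htot
      omega
    obtain ⟨i, hi⟩ := hrow
    have hge0 : (0:ℤ) ≤ ∑ j, A i j := Finset.sum_nonneg (fun j _ => hA0 i j)
    rcases eq_or_lt_of_le hge0 with hz | hpos
    · -- row is zero
      left
      apply Matrix.det_eq_zero_of_row_eq_zero i
      intro j
      have := (Finset.sum_eq_zero_iff_of_nonneg (fun j _ => hA0 i j)).mp hz.symm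
      exact this j (Finset.mem_univ j)
    · -- row sum = 1
      have hsum1 : ∑ j, A i j = 1 := by omega
      have hex : ∃ j, A i j = 1 := by
        by_contra hcon
        push_neg at hcon
        have : ∀ j, A i j = 0 := fun j => (hA i j).resolve_right (hcon j)
        simp [this] at hsum1
      obtain ⟨j, hj⟩ := hex
      have huniq : ∀ j', j' ≠ j → A i j' = 0 := by
        intro j' hne
        by_contra hcon
        have hj' : A i j' = 1 := (hA i j').resolve_left hcon
        have hsub : ({j, j'} : Finset (Fin (n+1))) ⊆ Finset.univ := Finset.subset_univ _
        have h2 : (2:ℤ) ≤ ∑ j, A i j := by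
          have := Finset.sum_le_sum_of_subset_of_nonneg hsub (fun x _ _ => hA0 i x)
          rw [Finset.sum_pair (Ne.symm hne)] at this
          omega
        omega
      -- expand determinant
      rw [Matrix.det_succ_row A i]
      rw [Finset.sum_eq_single j]
      · have hminor := ih (A.submatrix i.succAbove j.succAbove)
          (fun a b => hA _ _)
          (by
            intro S T hS hT
            have := hP (S.image i.succAbove) (T.image j.succAbove)
              (hS.image _) (hT.image _)
            rw [Finset.sum_image (fun a _ b _ h => Fin.succAbove_right_injective h)] at this
            rw [Finset.card_image_of_injective _ Fin.succAbove_right_injective,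
              Finset.card_image_of_injective _ Fin.succAbove_right_injective] at this
            calc (∑ a ∈ S, ∑ b ∈ T, A.submatrix i.succAbove j.succAbove a b) + 1
                = (∑ a ∈ S, ∑ b ∈ T.image j.succAbove, A (i.succAbove a) b) + 1 := by
                  congr 1
                  refine Finset.sum_congr rfl (fun a _ => ?_)
                  rw [Finset.sum_image (fun a _ b _ h => Fin.succAbove_right_injective h)]
                  rfl
              _ ≤ (S.card : ℤ) + T.card := this)
        rw [hj]
        rcases Nat.even_or_odd ((i : ℕ) + j) with he | ho
        · rw [he.neg_one_pow]
          rcases hminor with h | h | h <;> simp [h]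
        · rw [ho.neg_one_pow]
          rcases hminor with h | h | h <;> simp [h]
      · intro b _ hb
        rw [huniq b hb]
        ring
      · intro hj'
        exact absurd (Finset.mem_univ j) hj'

theorem stmt15 {m : ℕ} (M : Matrix (Fin m) (Fin m) ℤ)
    (hM : ∀ i j, M i j = 0 ∨ M i j = 1)
    (htree : (SimpleGraph.fromRel
      (fun i j : Fin m ⊕ Fin m => Matrix.fromBlocks 0 M Mᵀ 0 i j ≠ 0)).IsTree)
    (hirr : Irreducible
      ((Matrix.fromBlocks 0 M Mᵀ 0).charpoly.map (Int.castRingHom ℚ))) :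
    polyDisc (2 * m) (((Matrix.fromBlocks 0 M Mᵀ 0).map ((↑) : ℤ → ℂ)).charpoly)
      = 2 ^ (2 * m)
        * (polyDisc m (((Mᵀ * M).map ((↑) : ℤ → ℂ)).charpoly)) ^ 2 := by
  have hm : 0 < m := by
    have hne : Nonempty (Fin m ⊕ Fin m) := htree.isConnected.nonempty
    rcases hne with ⟨v⟩
    rcases v with i | i <;> exact i.pos
  -- determinant of M is ±1
  have hdet0 : M.det ≠ 0 := by
    intro h0
    have hmapQ : (Matrix.fromBlocks 0 M Mᵀ 0).map ⇑(Int.castRingHom ℚ)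
        = Matrix.fromBlocks 0 (M.map ⇑(Int.castRingHom ℚ)) (M.map ⇑(Int.castRingHom ℚ))ᵀ 0 := by
      rw [Matrix.fromBlocks_map, Matrix.transpose_map]
      congr 1 <;> ext i j <;> simp
    have hchar : (Matrix.fromBlocks 0 M Mᵀ 0).charpoly.map (Int.castRingHom ℚ)
        = (((M.map ⇑(Int.castRingHom ℚ))ᵀ * (M.map ⇑(Int.castRingHom ℚ))).charpoly).comp (X ^ 2) := by
      rw [← Matrix.charpoly_map, hmapQ, charpoly_block]
    set B := (M.map ⇑(Int.castRingHom ℚ))ᵀ * (M.map ⇑(Int.castRingHom ℚ)) with hB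
    have hdetB : B.det = 0 := by
      rw [hB, Matrix.det_mul, Matrix.det_transpose]
      have : (M.map ⇑(Int.castRingHom ℚ)).det = ((Int.castRingHom ℚ) M.det) := by
        rw [RingHom.map_det]; rfl
      rw [this, h0]
      simp
    have hcoeff : B.charpoly.coeff 0 = 0 := by
      have := Matrix.det_eq_sign_charpoly_coeff B
      rw [hdetB] at this
      have h2 : ((-1 : ℚ) ^ Fintype.card (Fin m)) ≠ 0 := by
        apply pow_ne_zero; norm_num
      field_simp at this
      exact (mul_eq_zero.mp this.symm).resolve_left h2
    have hXdvd : X ∣ (Matrix.fromBlocks 0 M Mᵀ 0).charpoly.map (Int.castRingHom ℚ) := by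
      rw [Polynomial.X_dvd_iff, hchar, coeff_zero_eq_eval_zero, eval_comp]
      simp [coeff_zero_eq_eval_zero] at hcoeff ⊢
      exact hcoeff
    obtain ⟨g, hg⟩ := hXdvd
    rcases hirr.isUnit_or_isUnit hg with hu | hu
    · exact Polynomial.not_isUnit_X hu
    · obtain ⟨r, hr, hCr⟩ := Polynomial.isUnit_iff.mp hu
      have hdeg1 : ((Matrix.fromBlocks 0 M Mᵀ 0).charpoly.map (Int.castRingHom ℚ)).natDegree
          = 2 * m := by
        rw [(Matrix.charpoly_monic _).natDegree_map, Matrix.charpoly_natDegree_eq_dim]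
        simp [two_mul]
      rw [hg, ← hCr] at hdeg1
      rw [Polynomial.natDegree_mul Polynomial.X_ne_zero
        (fun hc => hr.ne_zero (Polynomial.C_eq_zero.mp hc))] at hdeg1
      simp [Polynomial.natDegree_X, Polynomial.natDegree_C] at hdeg1
      omega
  have hdetM2 : M.det * M.det = 1 := by
    rcases det_pm m M hM (tree_bound M hM htree) with h | h | h
    · exact absurd h hdet0
    · rw [h]; ring
    · rw [h]; ring
  -- complex side
  have hmapC : (Matrix.fromBlocks 0 M Mᵀ 0).map ((↑) : ℤ → ℂ)
      = Matrix.fromBlocks 0 (M.map ((↑) : ℤ → ℂ)) (M.map ((↑) : ℤ → ℂ))ᵀ 0 := by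
    rw [Matrix.fromBlocks_map, Matrix.transpose_map]
    congr 1 <;> ext i j <;> simp
  set qC : Polynomial ℂ := ((Mᵀ * M).map ((↑) : ℤ → ℂ)).charpoly with hqC
  have hqCm : ((Mᵀ * M).map ((↑) : ℤ → ℂ)) = (M.map ((↑) : ℤ → ℂ))ᵀ * (M.map ((↑) : ℤ → ℂ)) := by
    have hco : ((↑) : ℤ → ℂ) = ⇑(Int.castRingHom ℂ) := rfl
    rw [hco, Matrix.map_mul, ← Matrix.transpose_map]
  have hfq : ((Matrix.fromBlocks 0 M Mᵀ 0).map ((↑) : ℤ → ℂ)).charpoly = qC.comp (X ^ 2) := by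
    rw [hmapC, charpoly_block, hqC, hqCm]
  have hqmonic : qC.Monic := Matrix.charpoly_monic _
  have hqdeg : qC.natDegree = m := by
    rw [hqC, Matrix.charpoly_natDegree_eq_dim, Fintype.card_fin]
  have hqsplits : Splits qC := IsAlgClosed.splits qC
  have hqcard : Multiset.card qC.roots = m := by
    rw [splits_iff_card_roots.mp hqsplits, hqdeg]
  set s := qC.roots with hs
  have hsqex : ∀ z : ℂ, ∃ w : ℂ, w ^ 2 = z := fun z =>
    IsAlgClosed.exists_pow_nat_eq z (by norm_num)
  choose sqr hsqspec using hsqex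
  have hqprod : qC = (s.map (fun a => X - C a)).prod :=
    hqsplits.eq_prod_roots_of_monic hqmonic
  have hfactor : qC.comp (X ^ 2)
      = ((s.map sqr + (s.map sqr).map (fun z => -z)).map (fun a => X - C a)).prod := by
    conv_lhs => rw [hqprod]
    have h1 : ((s.map (fun a => X - C a)).prod).comp (X ^ 2)
        = (s.map (fun a => (X - C a).comp (X ^ 2))).prod := by
      rw [show ∀ p : Polynomial ℂ, p.comp (X ^ 2) = (compRingHom (X ^ 2)) p from fun _ => rfl]
      rw [← Multiset.prod_hom _ (compRingHom (X ^ 2 : Polynomial ℂ)), Multiset.map_map]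
      rfl
    rw [h1]
    have h2 : s.map (fun a => (X - C a).comp (X ^ 2))
        = s.map (fun a => (X - C (sqr a)) * (X + C (sqr a))) := by
      apply Multiset.map_congr rfl
      intro a _
      rw [sub_comp, X_comp, C_comp]
      have hrw : (X - C (sqr a)) * (X + C (sqr a)) = X ^ 2 - C (sqr a * sqr a) := by
        rw [C_mul]; ring
      rw [hrw, ← pow_two, hsqspec a]
    rw [h2, Multiset.prod_map_mul, Multiset.map_add, Multiset.prod_add, Multiset.map_map,
      Multiset.map_map, Multiset.map_map]
    simp only [Function.comp_apply]
    congr 1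
    apply congrArg Multiset.prod
    apply Multiset.map_congr rfl
    intro a _
    rw [map_neg, sub_neg_eq_add]
  have hfroots : (qC.comp (X ^ 2)).roots = s.map sqr + (s.map sqr).map (fun z => -z) := by
    rw [hfactor, roots_multiset_prod_X_sub_C]
  have hfmonic : (qC.comp (X ^ 2)).Monic :=
    hqmonic.comp (monic_X_pow 2) (by simp)
  have hfcard : Multiset.card (qC.comp (X ^ 2)).roots = 2 * m := by
    rw [hfroots]
    simp only [Multiset.card_add, Multiset.card_map, hqcard]
    ring
  have hpdf := polyDisc_eq (qC.comp (X ^ 2)) hfmonic hfcard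
  have hpdq := polyDisc_eq qC hqmonic hqcard
  set q' : Polynomial ℂ := derivative qC with hq'
  have hder : ∀ z : ℂ, ((derivative (qC.comp (X ^ 2))).eval z) = 2 * z * q'.eval (z ^ 2) := by
    intro z
    rw [derivative_comp]
    simp [eval_comp]
    rw [hq']; ring
  set Q : ℂ := (s.map (fun r => q'.eval r)).prod with hQ
  have hProd : ((qC.comp (X ^ 2)).roots.map (fun r => (derivative (qC.comp (X ^ 2))).eval r)).prod
      = (-4) ^ m * s.prod * Q ^ 2 := by
    rw [hfroots, Multiset.map_add, Multiset.prod_add]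
    have e1 : ((s.map sqr).map (fun r => (derivative (qC.comp (X ^ 2))).eval r)).prod
        = (s.map (fun a => 2 * sqr a * q'.eval a)).prod := by
      rw [Multiset.map_map]
      apply congrArg
      apply Multiset.map_congr rfl
      intro a _
      simp only [Function.comp_apply, hder]
      rw [hsqspec a]
    have e2 : (((s.map sqr).map (fun z => -z)).map (fun r => (derivative (qC.comp (X ^ 2))).eval r)).prod
        = (s.map (fun a => -(2 * sqr a * q'.eval a))).prod := by
      rw [Multiset.map_map, Multiset.map_map]
      apply congrArg
      apply Multiset.map_congr rfl
      intro a _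
      simp only [Function.comp_apply, hder]
      rw [show (-sqr a) ^ 2 = sqr a ^ 2 by ring, hsqspec a]
      ring
    rw [e1, e2, ← Multiset.prod_map_mul]
    have hw : s.map (fun a => (2 * sqr a * q'.eval a) * -(2 * sqr a * q'.eval a))
        = s.map (fun a => (-4) * (a * (q'.eval a) ^ 2)) := by
      apply Multiset.map_congr rfl
      intro a _
      linear_combination (-4 * (Polynomial.eval a q') ^ 2) * hsqspec a
    rw [hw, Multiset.prod_map_mul]
    have hconst : (s.map (fun _ => (-4 : ℂ))).prod = (-4) ^ m := by
      rw [Multiset.map_const', Multiset.prod_replicate, hqcard]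
    rw [hconst, Multiset.prod_map_mul]
    have hsq2 : (s.map (fun a => (q'.eval a) ^ 2)).prod = Q ^ 2 := by
      rw [hQ, show (fun a : ℂ => (q'.eval a) ^ 2) = fun a => q'.eval a * q'.eval a by
        funext a; ring, Multiset.prod_map_mul, sq]
    rw [hsq2, Multiset.map_id', mul_assoc]
  -- product of roots of q is 1
  have hsprod : s.prod = 1 := by
    have h1 : qC.coeff 0 = (-1) ^ m * s.prod := by
      have := hqsplits.coeff_zero_eq_prod_roots_of_monic hqmonic
      rwa [hqdeg] at this
    have h2 : ((Mᵀ * M).map ((↑) : ℤ → ℂ)).det = (-1) ^ m * qC.coeff 0 := by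
      have := Matrix.det_eq_sign_charpoly_coeff ((Mᵀ * M).map ((↑) : ℤ → ℂ))
      rwa [Fintype.card_fin] at this
    have h3 : ((Mᵀ * M).map ((↑) : ℤ → ℂ)).det = 1 := by
      have hco : ((↑) : ℤ → ℂ) = ⇑(Int.castRingHom ℂ) := rfl
      rw [hco, ← RingHom.mapMatrix_apply, ← RingHom.map_det]
      rw [Matrix.det_mul, Matrix.det_transpose, hdetM2]
      simp
    have hsign : ((-1 : ℂ)) ^ m * ((-1 : ℂ)) ^ m = 1 := by
      rw [← mul_pow]; norm_num
    rw [h1] at h2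
    rw [h3] at h2
    calc s.prod = ((-1 : ℂ)) ^ m * ((-1 : ℂ)) ^ m * s.prod := by rw [hsign, one_mul]
      _ = ((-1 : ℂ)) ^ m * (((-1 : ℂ)) ^ m * s.prod) := by ring
      _ = 1 := by rw [← h2]
  -- final algebra
  rw [hfq, hpdf, hpdq, hProd, hsprod]
  have hc2m : (2 * m).choose 2 = m * (2 * m - 1) := by
    have h1 := Nat.choose_two_right (2 * m)
    have h2 : 2 * m * (2 * m - 1) = 2 * (m * (2 * m - 1)) := by ring
    omega
  rw [hc2m]
  have hexp : m * (2 * m - 1) + m = 2 * (m * m) := by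
    have h : 2 * m - 1 + 1 = 2 * m := by omega
    calc m * (2 * m - 1) + m = m * ((2 * m - 1) + 1) := by ring
      _ = m * (2 * m) := by rw [h]
      _ = 2 * (m * m) := by ring
  have hsign1 : ((-1 : ℂ)) ^ (m * (2 * m - 1)) * ((-1 : ℂ)) ^ m = 1 := by
    rw [← pow_add, hexp, pow_mul]
    norm_num
  have hsign2 : (((-1 : ℂ)) ^ (m.choose 2)) ^ 2 = 1 := by
    rw [← pow_mul, mul_comm, pow_mul]
    norm_num
  have h4m : ((2 : ℂ)) ^ (2 * m) = 4 ^ m := by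
    rw [pow_mul]
    norm_num
  rw [mul_pow, hsign2, one_mul, h4m]
  calc ((-1 : ℂ)) ^ (m * (2 * m - 1)) * ((-4) ^ m * 1 * Q ^ 2)
      = (((-1 : ℂ)) ^ (m * (2 * m - 1)) * ((-1)) ^ m) * (4 ^ m * Q ^ 2) := by
        rw [show ((-4 : ℂ)) ^ m = (-1) ^ m * 4 ^ m by rw [← mul_pow]; norm_num]
        ring
    _ = 4 ^ m * Q ^ 2 := by rw [hsign1, one_mul]
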